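/- For all nonnegative integers α ≠ β, one has I(α,β) = (He_{α+1}(0)·He_β(0) − He_{β+1}(0)·He_α(0)) / (α − β). -/

import Mathlib

open MeasureTheory Real Filter Polynomial Topology

/-- The probabilist's Hermite polynomial evaluated at a real number. -/
noncomputable def He (n : ℕ) (x : ℝ) : ℝ := Polynomial.aeval x (Polynomial.hermite n)

/-- The half-space Hermite-Gaussian integral `I(α,β)`. -/
noncomputable def I (a b : ℕ) : ℝ :=
  ∫ x in Set.Iic (0 : ℝ), He a x * He b x * Real.exp (-x ^ 2 / 2)

lemma derivative_hermite_succ' (n : ℕ) :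
    derivative (hermite (n + 1)) = ((n : Polynomial ℤ) + 1) * hermite n := by
  induction n with
  | zero => simp [hermite_succ]
  | succ n ih =>
    rw [hermite_succ (n + 1), derivative_sub, derivative_mul, derivative_X, one_mul, ih,
      derivative_mul, hermite_succ n]
    push_cast
    simp only [derivative_add, derivative_natCast, derivative_one, add_zero, zero_add, zero_mul]
    ring

lemma He_hasDerivAt (n : ℕ) (x : ℝ) :
    HasDerivAt (He (n + 1)) (((n : ℝ) + 1) * He n x) x := by
  have h := (hermite (n + 1)).hasDerivAt_aeval (𝕜 := ℝ) x
  rw [derivative_hermite_succ'] at h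
  unfold He
  refine h.congr_deriv ?_
  simp

lemma gauss_hasDerivAt (x : ℝ) :
    HasDerivAt (fun x : ℝ => Real.exp (-x ^ 2 / 2)) (-x * Real.exp (-x ^ 2 / 2)) x := by
  have h1 : HasDerivAt (fun x : ℝ => -x ^ 2 / 2) (-x) x := by
    have := ((hasDerivAt_pow 2 x).neg).div_const 2
    refine this.congr_deriv ?_
    ring
  simpa [mul_comm] using h1.exp

lemma Heg_hasDerivAt (n : ℕ) (x : ℝ) :
    HasDerivAt (fun x => He n x * Real.exp (-x ^ 2 / 2))
      (-(He (n + 1) x * Real.exp (-x ^ 2 / 2))) x := by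
  have h1 : HasDerivAt (He n) (Polynomial.aeval x (derivative (hermite n))) x :=
    (hermite n).hasDerivAt_aeval x
  have h2 := h1.mul (gauss_hasDerivAt x)
  refine h2.congr_deriv ?_
  have hs : He (n + 1) x = x * He n x - Polynomial.aeval x (derivative (hermite n)) := by
    simp [He, hermite_succ]
  rw [hs]
  ring

lemma pow_le_factorial_exp (k : ℕ) {t : ℝ} (ht : 0 ≤ t) :
    t ^ k ≤ (k.factorial : ℝ) * Real.exp t := by
  have h1 : t ^ k / (k.factorial : ℝ) ≤ Real.exp t := by
    refine le_trans ?_ (Real.sum_le_exp_of_nonneg ht (k + 1))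
    exact Finset.single_le_sum (f := fun i => t ^ i / (i.factorial : ℝ))
      (fun i _ => by positivity) (Finset.self_mem_range_succ k)
  have hk : (0 : ℝ) < k.factorial := by positivity
  calc t ^ k = (k.factorial : ℝ) * (t ^ k / k.factorial) := by field_simp
    _ ≤ (k.factorial : ℝ) * Real.exp t := mul_le_mul_of_nonneg_left h1 hk.le

lemma abs_pow_le (k : ℕ) (x : ℝ) :
    |x| ^ k ≤ 1 + ((k.factorial : ℝ) * 4 ^ k) * Real.exp (x ^ 2 / 4) := by
  rcases le_or_gt (|x|) 1 with hx | hx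
  · have h1 : |x| ^ k ≤ 1 := pow_le_one₀ (abs_nonneg x) hx
    have h2 : (0 : ℝ) ≤ ((k.factorial : ℝ) * 4 ^ k) * Real.exp (x ^ 2 / 4) := by positivity
    linarith
  · have h1 : |x| ^ k ≤ (x ^ 2) ^ k := by
      have hle : |x| ≤ |x| ^ 2 := by nlinarith [abs_nonneg x]
      calc |x| ^ k ≤ (|x| ^ 2) ^ k := pow_le_pow_left₀ (abs_nonneg x) hle k
        _ = (x ^ 2) ^ k := by rw [sq_abs]
    have h2 : (x ^ 2) ^ k = 4 ^ k * (x ^ 2 / 4) ^ k := by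
      rw [div_pow, ← mul_div_assoc, mul_comm, mul_div_assoc]
      field_simp
    have h3 : (x ^ 2 / 4) ^ k ≤ (k.factorial : ℝ) * Real.exp (x ^ 2 / 4) :=
      pow_le_factorial_exp k (by positivity)
    have h4 : (0 : ℝ) ≤ (4 : ℝ) ^ k := by positivity
    nlinarith

lemma mono_bound (k : ℕ) (x : ℝ) :
    |x ^ k * Real.exp (-x ^ 2 / 2)| ≤
      (1 + (k.factorial : ℝ) * 4 ^ k) * Real.exp (-x ^ 2 / 4) := by
  have he : (0 : ℝ) < Real.exp (-x ^ 2 / 2) := Real.exp_pos _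
  rw [abs_mul, abs_pow, abs_of_pos he]
  calc |x| ^ k * Real.exp (-x ^ 2 / 2)
      ≤ (1 + ((k.factorial : ℝ) * 4 ^ k) * Real.exp (x ^ 2 / 4)) * Real.exp (-x ^ 2 / 2) :=
        mul_le_mul_of_nonneg_right (abs_pow_le k x) he.le
    _ = Real.exp (-x ^ 2 / 2) +
        ((k.factorial : ℝ) * 4 ^ k) * Real.exp (-x ^ 2 / 4) := by
        have hmul : Real.exp (x ^ 2 / 4) * Real.exp (-x ^ 2 / 2) = Real.exp (-x ^ 2 / 4) := by
          rw [← Real.exp_add]; ring_nf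
        linear_combination ((k.factorial : ℝ) * 4 ^ k) * hmul
    _ ≤ Real.exp (-x ^ 2 / 4) +
        ((k.factorial : ℝ) * 4 ^ k) * Real.exp (-x ^ 2 / 4) := by
        have hle : Real.exp (-x ^ 2 / 2) ≤ Real.exp (-x ^ 2 / 4) :=
          Real.exp_le_exp.2 (by nlinarith [sq_nonneg x])
        linarith
    _ = (1 + (k.factorial : ℝ) * 4 ^ k) * Real.exp (-x ^ 2 / 4) := by ring

lemma integrable_gauss4 : Integrable fun x : ℝ => Real.exp (-x ^ 2 / 4) := by
  have h := integrable_exp_neg_mul_sq (by norm_num : (0 : ℝ) < 1 / 4)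
  refine h.congr (Filter.Eventually.of_forall fun x => ?_)
  show Real.exp (-(1 / 4) * x ^ 2) = Real.exp (-x ^ 2 / 4)
  rw [show -(1 / 4 : ℝ) * x ^ 2 = -x ^ 2 / 4 by ring]

lemma integrable_monomial (k : ℕ) :
    Integrable fun x : ℝ => x ^ k * Real.exp (-x ^ 2 / 2) := by
  have hc : Continuous fun x : ℝ => x ^ k * Real.exp (-x ^ 2 / 2) :=
    (continuous_pow k).mul (Real.continuous_exp.comp (((continuous_pow 2).neg).div_const 2))
  exact Integrable.mono' (integrable_gauss4.const_mul (1 + (k.factorial : ℝ) * 4 ^ k))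
    hc.aestronglyMeasurable (Filter.Eventually.of_forall fun x => mono_bound k x)

lemma tendsto_gauss4 : Tendsto (fun x : ℝ => Real.exp (-x ^ 2 / 4)) atBot (𝓝 0) := by
  have h1 : Tendsto (fun x : ℝ => x ^ 2) atBot atTop := by
    have hp : Tendsto (fun x : ℝ => x ^ 2) atTop atTop :=
      tendsto_pow_atTop (by norm_num)
    have := hp.comp (tendsto_neg_atBot_atTop : Tendsto (fun x : ℝ => -x) atBot atTop)
    exact this.congr fun x => by simp [Function.comp]
  have h2 : Tendsto (fun t : ℝ => -t / 4) atTop atBot := by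
    have := (tendsto_neg_atTop_atBot : Tendsto (fun x : ℝ => -x) atTop atBot).comp
      (Filter.Tendsto.atTop_div_const (by norm_num : (0 : ℝ) < 4) tendsto_id)
    exact this.congr fun x => by simp [Function.comp, neg_div]
  have h3 := Real.tendsto_exp_atBot.comp (h2.comp h1)
  exact h3.congr fun x => by simp [Function.comp, neg_div]

lemma tendsto_monomial (k : ℕ) :
    Tendsto (fun x : ℝ => x ^ k * Real.exp (-x ^ 2 / 2)) atBot (𝓝 0) := by
  apply squeeze_zero_norm (fun x => mono_bound k x)
  simpa using tendsto_gauss4.const_mul (1 + (k.factorial : ℝ) * 4 ^ k)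

lemma integrable_poly (p : Polynomial ℤ) :
    Integrable fun x : ℝ => (Polynomial.aeval x p : ℝ) * Real.exp (-x ^ 2 / 2) := by
  have key : ∀ x : ℝ, (Polynomial.aeval x p : ℝ) =
      ∑ k ∈ Finset.range (p.natDegree + 1), (p.coeff k : ℝ) * x ^ k := by
    intro x
    rw [Polynomial.aeval_eq_sum_range]
    simp [zsmul_eq_mul]
  simp_rw [key, Finset.sum_mul, mul_assoc]
  exact integrable_finset_sum _ fun k _ => (integrable_monomial k).const_mul _

lemma tendsto_poly (p : Polynomial ℤ) :
    Tendsto (fun x : ℝ => (Polynomial.aeval x p : ℝ) * Real.exp (-x ^ 2 / 2)) atBot (𝓝 0) := by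
  have key : ∀ x : ℝ, (Polynomial.aeval x p : ℝ) =
      ∑ k ∈ Finset.range (p.natDegree + 1), (p.coeff k : ℝ) * x ^ k := by
    intro x
    rw [Polynomial.aeval_eq_sum_range]
    simp [zsmul_eq_mul]
  simp_rw [key, Finset.sum_mul, mul_assoc]
  have : Tendsto (fun x : ℝ => ∑ k ∈ Finset.range (p.natDegree + 1),
      (p.coeff k : ℝ) * (x ^ k * Real.exp (-x ^ 2 / 2))) atBot
      (𝓝 (∑ k ∈ Finset.range (p.natDegree + 1), (p.coeff k : ℝ) * 0)) :=
    tendsto_finset_sum _ fun k _ => (tendsto_monomial k).const_mul _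
  simpa using this

theorem I_eq_of_ne (α β : ℕ) (h : α ≠ β) :
    I α β = (He (α + 1) 0 * He β 0 - He (β + 1) 0 * He α 0) / ((α : ℝ) - β) := by
  set F : ℝ → ℝ := fun x => He (α + 1) x * (He β x * Real.exp (-x ^ 2 / 2)) -
    He (β + 1) x * (He α x * Real.exp (-x ^ 2 / 2)) with hFdef
  have hF : ∀ x : ℝ, HasDerivAt F
      (((α : ℝ) - β) * (He α x * He β x * Real.exp (-x ^ 2 / 2))) x := by
    intro x
    have h1 := (He_hasDerivAt α x).mul (Heg_hasDerivAt β x)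
    have h2 := (He_hasDerivAt β x).mul (Heg_hasDerivAt α x)
    have h3 := h1.sub h2
    refine h3.congr_deriv ?_
    ring
  have hInt : IntegrableOn
      (fun x => ((α : ℝ) - β) * (He α x * He β x * Real.exp (-x ^ 2 / 2)))
      (Set.Iic (0 : ℝ)) := by
    apply Integrable.integrableOn
    have := (integrable_poly (hermite α * hermite β)).const_mul ((α : ℝ) - β)
    simpa [He, mul_assoc] using this
  have hTend : Tendsto F atBot (𝓝 0) := by
    have := tendsto_poly (hermite (α + 1) * hermite β - hermite (β + 1) * hermite α)
    refine Tendsto.congr ?_ this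
    intro x
    simp only [map_sub, map_mul, hFdef, He]
    ring
  have key := integral_Iic_of_hasDerivAt_of_tendsto' (a := (0 : ℝ))
    (fun x _ => hF x) hInt hTend
  rw [MeasureTheory.integral_const_mul] at key
  have hc : ((α : ℝ) - β) ≠ 0 := sub_ne_zero.mpr (by exact_mod_cast h)
  have hI : ((α : ℝ) - β) * I α β =
      He (α + 1) 0 * He β 0 - He (β + 1) 0 * He α 0 := by
    rw [I, key, hFdef]
    norm_num
  field_simp
  linarith [hI]
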